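/- A non-separable Lindelöf Hausdorff topological group in which {1} is a Gδ-set (i.e., of countable pseudocharacter) does not have a suitable set. -/

import Mathlib

open Set TopologicalSpace

/-- In a Lindelöf space, a closed set all of whose points are isolated (witnessed
by open sets in the ambient space) is countable. -/
lemma countable_of_closed_of_isolated {X : Type*} [TopologicalSpace X] [LindelofSpace X]
    {T : Set X} (hT : IsClosed T) (h : ∀ x ∈ T, ∃ U : Set X, IsOpen U ∧ U ∩ T = {x}) :
    T.Countable := by
  choose U hUo hU using h
  obtain ⟨t, ht, hcov⟩ := hT.isLindelof.elim_nhds_subcover' (fun x hx => U x hx)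
    (fun x hx => (hUo x hx).mem_nhds (by
      have : x ∈ U x hx ∩ T := (hU x hx) ▸ rfl
      exact this.1))
  have : T ⊆ Subtype.val '' t := by
    intro x hx
    obtain ⟨y, hy, hxy⟩ := mem_iUnion₂.1 (hcov hx)
    have : x ∈ U y y.2 ∩ T := ⟨hxy, hx⟩
    rw [hU y y.2] at this
    exact ⟨y, hy, this.symm⟩
  exact ((ht.image _).mono this)

lemma countable_subgroup_closure {G : Type*} [Group G] {S : Set G} (hS : S.Countable) :
    (Subgroup.closure S : Set G).Countable := by
  have : Countable S := hS.to_subtype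
  have h := FreeGroup.range_lift_eq_closure (f := (Subtype.val : S → G))
  rw [Subtype.range_coe] at h
  rw [← h]
  have : Countable (FreeGroup S) := by
    unfold FreeGroup
    infer_instance
  exact (Set.countable_range _).mono (by rintro x ⟨y, rfl⟩; exact ⟨y, rfl⟩)

/-- A subset `S` of a topological group `G` is a *suitable set* for `G` if `S` is
discrete in its subspace topology, `S ∪ {1}` is closed in `G`, and the subgroup
generated by `S` is topologically dense in `G`. -/
def IsSuitable {G : Type*} [Group G] [TopologicalSpace G] (S : Set G) : Prop :=
  DiscreteTopology S ∧ IsClosed (S ∪ {1}) ∧ Dense (Subgroup.closure S : Set G)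

/-- A non-separable Lindelöf Hausdorff topological group of countable
pseudocharacter (`{1}` is a Gδ-set) does not have a suitable set. -/
theorem no_suitable_set_of_nonseparable_lindelof
    {G : Type*} [Group G] [TopologicalSpace G] [IsTopologicalGroup G] [T2Space G]
    [LindelofSpace G] (hGδ : IsGδ ({1} : Set G))
    (hns : ¬ TopologicalSpace.SeparableSpace G) :
    ¬ ∃ S : Set G, IsSuitable S := by
  rintro ⟨S, hdisc, hclosed, hdense⟩
  obtain ⟨f, hfo, hf⟩ := hGδ.eq_iInter_nat
  -- each point of S is isolated, witnessed by an open set of G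
  have hiso : ∀ x ∈ S, ∃ U : Set G, IsOpen U ∧ U ∩ S = {x} := by
    intro x hx
    have : IsOpen ({(⟨x, hx⟩ : S)} : Set S) := isOpen_discrete _
    rw [isOpen_induced_iff] at this
    obtain ⟨U, hUo, hU⟩ := this
    refine ⟨U, hUo, ?_⟩
    ext y
    constructor
    · rintro ⟨hyU, hyS⟩
      have : (⟨y, hyS⟩ : S) ∈ (Subtype.val ⁻¹' U : Set S) := hyU
      rw [hU] at this
      simpa using congrArg Subtype.val this
    · rintro rfl
      refine ⟨?_, hx⟩
      have h2 : (⟨_, hx⟩ : S) ∈ (Subtype.val ⁻¹' U : Set S) := by rw [hU]; rfl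
      exact h2
  -- S is countable
  have hScount : S.Countable := by
    have h1 : (1 : G) ∈ ⋂ n, f n := by rw [← hf]; rfl
    have key : ∀ n : ℕ, ((S ∪ {1}) \ f n).Countable := by
      intro n
      apply countable_of_closed_of_isolated (hclosed.sdiff (hfo n))
      intro x hx
      have hxS : x ∈ S := by
        rcases hx.1 with h | h
        · exact h
        · exact absurd (h ▸ mem_iInter.1 h1 n) hx.2
      obtain ⟨U, hUo, hU⟩ := hiso x hxS
      refine ⟨U, hUo, ?_⟩
      apply Subset.antisymm
      · intro y hy
        have : y ∈ U ∩ S := ⟨hy.1, by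
          rcases hy.2.1 with h | h
          · exact h
          · exact absurd (h ▸ mem_iInter.1 h1 n) hy.2.2⟩
        rw [hU] at this; exact this
      · rintro y rfl
        have hxU : y ∈ U := by
          have : y ∈ U ∩ S := hU ▸ rfl
          exact this.1
        exact ⟨hxU, hx⟩
    have : S ⊆ {1} ∪ ⋃ n, ((S ∪ {1}) \ f n) := by
      intro x hx
      by_cases hx1 : x = 1
      · exact Or.inl hx1
      · right
        have : x ∉ ⋂ n, f n := by rw [← hf]; simpa using hx1
        obtain ⟨n, hn⟩ := by simpa using this
        exact mem_iUnion.2 ⟨n, ⟨Or.inl hx, hn⟩⟩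
    exact ((countable_singleton 1).union (countable_iUnion key)).mono this
  -- hence G is separable: contradiction
  exact hns ⟨⟨_, countable_subgroup_closure hScount, hdense⟩⟩
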